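/- Let 1 ≤ r ≤ n and v₁,…,v_r ∈ ℤ^{n+1} be a primitive collection. Then there exists a primitive collection u₁,…,u_{n+1-r} ∈ ℤ^{n+1} such that v_i · u_j = 0 for all i, j, and ‖v₁∧⋯∧v_r‖ = ‖u₁∧⋯∧u_{n+1-r}‖. -/

import Mathlib

open Finset
open Matrix

/-- The coordinates of the wedge product v₁ ∧ ⋯ ∧ v_k of vectors in ℝⁿ, in the
standard orthonormal basis of ⋀^k(ℝⁿ): the coordinate at an index set s of
cardinality k is det (v_j (s_i))_{i,j}; all other coordinates vanish. -/
noncomputable def wedge {n k : ℕ} (v : Fin k → Fin n → ℝ) : Finset (Fin n) → ℝ :=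
  fun s =>
    if h : s.card = k then
      Matrix.det (Matrix.of fun p q : Fin k => v q ((s.orderIsoOfFin h p) : Fin n))
    else 0

/-- The inner product on multivectors induced by the Euclidean inner product,
making the standard wedge basis orthonormal. -/
noncomputable def mvInner {n : ℕ} (x y : Finset (Fin n) → ℝ) : ℝ :=
  ∑ s : Finset (Fin n), x s * y s

/-- The Euclidean norm of a multivector. -/
noncomputable def mvNorm {n : ℕ} (x : Finset (Fin n) → ℝ) : ℝ :=
  Real.sqrt (mvInner x x)

/-- The Euclidean norm on ℝⁿ. -/
noncomputable def eNorm {n : ℕ} (a : Fin n → ℝ) : ℝ :=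
  Real.sqrt (∑ k, a k ^ 2)

/-- Left wedge of a vector with a multivector, in coordinates. -/
noncomputable def vwedge {n : ℕ} (a : Fin n → ℝ) (w : Finset (Fin n) → ℝ) :
    Finset (Fin n) → ℝ :=
  fun s => ∑ x ∈ s, (-1 : ℝ) ^ (s.filter (fun y => y < x)).card * a x * w (s.erase x)

/-- A collection of integer vectors is primitive if it is linearly independent over ℝ
and its ℤ-span equals the intersection of ℤⁿ with its ℝ-span. -/
def IsPrimitive {n r : ℕ} (v : Fin r → Fin n → ℤ) : Prop :=
  LinearIndependent ℝ (fun j => fun k => (v j k : ℝ)) ∧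
  ∀ x : Fin n → ℤ,
    ((fun k => (x k : ℝ)) ∈
      Submodule.span ℝ (Set.range fun j => fun k => (v j k : ℝ))) →
    x ∈ Submodule.span ℤ (Set.range v)



lemma aux_jac22 {K L : Type*} [Fintype K] [Fintype L] [DecidableEq K] [DecidableEq L]
    (a : Matrix K K ℝ) (b : Matrix K L ℝ) (c : Matrix L K ℝ) (d : Matrix L L ℝ)
    (p : Matrix K K ℝ) (q : Matrix K L ℝ) (r : Matrix L K ℝ) (s : Matrix L L ℝ)
    (h : Matrix.fromBlocks a b c d * Matrix.fromBlocks p q r s = 1) :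
    (Matrix.fromBlocks a b c d).det * s.det = a.det := by
  rw [Matrix.fromBlocks_multiply, ← Matrix.fromBlocks_one] at h
  have e12 : a * q + b * s = 0 := by
    ext i j
    have := congrFun (congrFun h (Sum.inl i)) (Sum.inr j)
    simpa [Matrix.fromBlocks] using this
  have e22 : c * q + d * s = 1 := by
    ext i j
    have := congrFun (congrFun h (Sum.inr i)) (Sum.inr j)
    simpa [Matrix.fromBlocks] using this
  have key : Matrix.fromBlocks a b c d * Matrix.fromBlocks 1 q 0 s
      = Matrix.fromBlocks a 0 c 1 := by
    rw [Matrix.fromBlocks_multiply]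
    rw [Matrix.mul_one, Matrix.mul_zero, add_zero, Matrix.mul_one, Matrix.mul_zero, add_zero,
      e12, e22]
  have hdet := congrArg Matrix.det key
  rw [Matrix.det_mul, Matrix.det_fromBlocks_zero₂₁, Matrix.det_fromBlocks_zero₁₂] at hdet
  simpa using hdet

noncomputable def castMap (N : ℕ) : (Fin N → ℤ) →ₗ[ℤ] (Fin N → ℝ) where
  toFun x := fun k => (x k : ℝ)
  map_add' x y := by ext k; push_cast; simp
  map_smul' c x := by ext k; simp

lemma aux_rows_primitive {N : ℕ} (C D : Matrix (Fin N) (Fin N) ℤ)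
    (hCD : C * D = 1) (hDC : D * C = 1) {m : ℕ} (φ : Fin m → Fin N)
    (hφ : Function.Injective φ) :
    IsPrimitive (fun j => C (φ j)) := by
  set Cr : Matrix (Fin N) (Fin N) ℝ := C.map ⇑(Int.castRingHom ℝ) with hCr
  set Dr : Matrix (Fin N) (Fin N) ℝ := D.map ⇑(Int.castRingHom ℝ) with hDr
  have hCDr : Cr * Dr = 1 := by
    rw [hCr, hDr, ← Matrix.map_mul, hCD]
    exact Matrix.map_one _ (by simp) (by simp)
  have hDCr : Dr * Cr = 1 := by
    rw [hCr, hDr, ← Matrix.map_mul, hDC]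
    exact Matrix.map_one _ (by simp) (by simp)
  haveI : Invertible Cr := invertibleOfLeftInverse Cr Dr hDCr
  have hfull : LinearIndependent ℝ (fun i => Cr i) :=
    Matrix.linearIndependent_rows_of_invertible Cr
  have hrow : ∀ i k, Cr i k = ((C i k : ℤ) : ℝ) := fun i k => rfl
  constructor
  · have h := hfull.comp φ hφ
    convert h using 1
    rfl
  · intro x hx
    set y : Fin N → ℤ := x ᵥ* D with hy
    have hxy : x = y ᵥ* C := by
      rw [hy, Matrix.vecMul_vecMul, hDC, Matrix.vecMul_one]
    have hxsum : x = ∑ i, y i • C i := by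
      rw [hxy]; ext k
      simp [Matrix.vecMul, dotProduct, Finset.sum_apply]
    rw [Submodule.mem_span_range_iff_exists_fun] at hx
    obtain ⟨d, hd⟩ := hx
    -- extend d by zero
    set g : Fin N → ℝ := fun i => ∑ j, if φ j = i then d j else 0 with hg
    have hgsum : ∑ i, g i • Cr i = ∑ j, d j • Cr (φ j) := by
      rw [hg]
      simp only [Finset.sum_smul, ite_smul, zero_smul]
      rw [Finset.sum_comm]
      simp [Finset.sum_ite_eq]
    have hxcast : (fun k => ((x k : ℤ) : ℝ)) = ∑ i, ((y i : ℤ) : ℝ) • Cr i := by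
      ext k
      rw [hxsum]
      push_cast [Finset.sum_apply, Pi.smul_apply, smul_eq_mul]
      rfl
    have hzero : ∑ i, (((y i : ℤ) : ℝ) - g i) • Cr i = 0 := by
      simp only [sub_smul, Finset.sum_sub_distrib]
      rw [← hxcast, hgsum]
      rw [sub_eq_zero]
      rw [← hd]
      rfl
    have hcoef : ∀ i, ((y i : ℤ) : ℝ) - g i = 0 :=
      Fintype.linearIndependent_iff.mp hfull _ hzero
    have hyzero : ∀ i, i ∉ Set.range φ → y i = 0 := by
      intro i hi
      have h1 := hcoef i
      have h2 : g i = 0 := by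
        rw [hg]
        apply Finset.sum_eq_zero
        intro j _
        rw [if_neg]
        exact fun hc => hi ⟨j, hc⟩
      rw [h2, sub_zero] at h1
      exact_mod_cast h1
    have h1 : ∑ i ∈ Finset.univ.image φ, y i • C i = ∑ j, y (φ j) • C (φ j) :=
      Finset.sum_image (fun a _ b _ h => hφ h)
    have h2 : ∑ i ∈ Finset.univ.image φ, y i • C i = ∑ i, y i • C i := by
      apply Finset.sum_subset (Finset.subset_univ _)
      intro i _ hi
      have hr : i ∉ Set.range φ := by
        rintro ⟨j, hj⟩
        exact hi (Finset.mem_image.mpr ⟨j, Finset.mem_univ j, hj⟩)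
      rw [hyzero i hr, zero_smul]
    have hxs : x = ∑ j, y (φ j) • C (φ j) := by rw [hxsum, ← h2, h1]
    rw [hxs]
    exact Submodule.sum_mem _ fun j _ =>
      Submodule.smul_mem _ _ (Submodule.subset_span ⟨j, rfl⟩)

lemma aux_basis {n r : ℕ} (h2 : r ≤ n + 1)
    (v : Fin r → Fin (n + 1) → ℤ) (hv : IsPrimitive v) :
    ∃ b : Module.Basis (Fin r ⊕ Fin (n + 1 - r)) ℤ (Fin (n + 1) → ℤ),
      ∀ i, b (Sum.inl i) = v i := by
  obtain ⟨hli0, hsat⟩ := hv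
  -- ℤ-linear independence of v
  have hliZ : LinearIndependent ℤ v := by
    have h1 : LinearIndependent ℤ (fun j => fun k => ((v j k : ℤ) : ℝ)) :=
      hli0.restrict_scalars (by
        intro a b hab
        simpa using hab)
    have h2' : LinearIndependent ℤ (castMap (n+1) ∘ v) := h1
    exact LinearIndependent.of_comp (castMap (n+1)) h2'
  set N := Submodule.span ℤ (Set.range v) with hN
  set bN : Module.Basis (Fin r) ℤ N := Module.Basis.span hliZ with hbN
  -- N elements cast into the real span
  have hNR : ∀ z ∈ N, (fun k => ((z k : ℤ) : ℝ)) ∈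
      Submodule.span ℝ (Set.range fun j => fun k => ((v j k : ℤ) : ℝ)) := by
    intro z hz
    have hle : N ≤ Submodule.comap (castMap (n+1))
        (Submodule.restrictScalars ℤ
          (Submodule.span ℝ (Set.range fun j => fun k => ((v j k : ℤ) : ℝ)))) := by
      rw [hN, Submodule.span_le]
      rintro _ ⟨j, rfl⟩
      exact Submodule.subset_span ⟨j, rfl⟩
    exact hle hz
  -- the quotient is torsion-free
  haveI : NoZeroSMulDivisors ℤ ((Fin (n+1) → ℤ) ⧸ N) := by
    constructor
    intro c x hcx
    by_contra hcon
    push_neg at hcon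
    obtain ⟨hc, hx⟩ := hcon
    obtain ⟨y, rfl⟩ := Submodule.mkQ_surjective N x
    rw [← _root_.map_smul, Submodule.mkQ_apply, Submodule.Quotient.mk_eq_zero] at hcx
    have hcy : (fun k => (((c • y) k : ℤ) : ℝ)) ∈
        Submodule.span ℝ (Set.range fun j => fun k => ((v j k : ℤ) : ℝ)) := hNR _ hcx
    have hyR : (fun k => ((y k : ℤ) : ℝ)) ∈
        Submodule.span ℝ (Set.range fun j => fun k => ((v j k : ℤ) : ℝ)) := by
      have := Submodule.smul_mem _ ((c : ℝ)⁻¹) hcy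
      convert this using 1
      ext k
      have hc' : (c : ℝ) ≠ 0 := Int.cast_ne_zero.mpr hc
      simp only [Pi.smul_apply, smul_eq_mul, Int.cast_mul, Pi.smul_apply]
      push_cast
      field_simp
    have := hsat y hyR
    exact hx (by rwa [Submodule.mkQ_apply, Submodule.Quotient.mk_eq_zero])
  haveI : Module.Free ℤ ((Fin (n+1) → ℤ) ⧸ N) := Module.free_of_finite_type_torsion_free'
  -- split the quotient map
  obtain ⟨s, hs⟩ := Module.projective_lifting_property N.mkQ LinearMap.id
    (Submodule.mkQ_surjective N)
  have hsq : ∀ q, N.mkQ (s q) = q := fun q => LinearMap.congr_fun hs q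
  have sInj : Function.Injective s := by
    intro a b hab
    have := congrArg N.mkQ hab
    rwa [hsq, hsq] at this
  have hcompl : IsCompl N (LinearMap.range s) := by
    constructor
    · rw [disjoint_iff_inf_le]
      rintro z ⟨hzN, q, rfl⟩
      have h0 : N.mkQ (s q) = 0 := by
        rwa [Submodule.mkQ_apply, Submodule.Quotient.mk_eq_zero]
      rw [hsq] at h0
      simp [h0]
    · rw [codisjoint_iff_le_sup]
      intro z _
      have h1 : z - s (N.mkQ z) ∈ N := by
        rw [← Submodule.Quotient.mk_eq_zero, ← Submodule.mkQ_apply, map_sub, hsq, sub_self]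
      exact Submodule.mem_sup.mpr ⟨z - s (N.mkQ z), h1, s (N.mkQ z),
        ⟨N.mkQ z, rfl⟩, by ring⟩
  set Q := (Fin (n+1) → ℤ) ⧸ N with hQ
  set ι := Module.Free.ChooseBasisIndex ℤ Q with hι
  have bQ : Module.Basis ι ℤ Q := Module.Free.chooseBasis ℤ Q
  set bRS : Module.Basis ι ℤ (LinearMap.range s) := bQ.map (LinearEquiv.ofInjective s sInj)
    with hbRS
  set b0 : Module.Basis (Fin r ⊕ ι) ℤ (Fin (n+1) → ℤ) :=
    (bN.prod bRS).map (Submodule.prodEquivOfIsCompl N (LinearMap.range s) hcompl)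
    with hb0def
  have hb0 : ∀ i, b0 (Sum.inl i) = v i := by
    intro i
    rw [hb0def, Module.Basis.map_apply]
    have h1 : (bN.prod bRS) (Sum.inl i) = (bN i, 0) := by
      ext
      · rw [Module.Basis.prod_apply_inl_fst]
      · rw [Module.Basis.prod_apply_inl_snd]
    rw [h1, Submodule.coe_prodEquivOfIsCompl', hbN]
    simp only [ZeroMemClass.coe_zero, add_zero]
    exact congrArg Subtype.val (Module.Basis.span_apply hliZ i)
  -- card of ι
  have hcard : r + Fintype.card ι = n + 1 := by
    have e1 : Module.finrank ℤ (Fin (n+1) → ℤ) = Fintype.card (Fin r ⊕ ι) :=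
      Module.finrank_eq_card_basis b0
    have e2 : Module.finrank ℤ (Fin (n+1) → ℤ) = n + 1 := by
      rw [Module.finrank_eq_card_basis (Pi.basisFun ℤ (Fin (n+1))), Fintype.card_fin]
    rw [e2, Fintype.card_sum, Fintype.card_fin] at e1
    omega
  have eι : ι ≃ Fin (n + 1 - r) := Fintype.equivFinOfCardEq (by omega)
  refine ⟨b0.reindex (Equiv.sumCongr (Equiv.refl (Fin r)) eι), fun i => ?_⟩
  rw [Module.Basis.reindex_apply]
  simpa using hb0 i

theorem stmt8 (n r : ℕ) (h1 : 1 ≤ r) (h2 : r ≤ n)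
    (v : Fin r → Fin (n + 1) → ℤ) (hv : IsPrimitive v) :
    ∃ u : Fin (n + 1 - r) → Fin (n + 1) → ℤ, IsPrimitive u ∧
      (∀ i j, ∑ k, v i k * u j k = 0) ∧
      mvNorm (wedge fun j => fun k => ((v j k : ℝ))) =
        mvNorm (wedge fun j => fun k => ((u j k : ℝ))) := by
  obtain ⟨b1, hb1⟩ := aux_basis (by omega) v hv
  set eFin : (Fin r ⊕ Fin (n + 1 - r)) ≃ Fin (n + 1) :=
    finSumFinEquiv.trans (finCongr (by omega)) with heFin
  set b' := b1.reindex eFin with hb'def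
  have hb' : ∀ i, b' (eFin (Sum.inl i)) = v i := by
    intro i
    rw [hb'def, Module.Basis.reindex_apply, Equiv.symm_apply_apply]
    exact hb1 i
  set A : Matrix (Fin (n + 1)) (Fin (n + 1)) ℤ := Matrix.of fun i k => b' i k with hA
  haveI hinvT : Invertible ((Pi.basisFun ℤ (Fin (n + 1))).toMatrix ⇑b') :=
    (Pi.basisFun ℤ (Fin (n + 1))).invertibleToMatrix b'
  have hAT : A = ((Pi.basisFun ℤ (Fin (n + 1))).toMatrix ⇑b')ᵀ := by
    ext i k
    rw [hA, Matrix.transpose_apply, Module.Basis.toMatrix_apply, Pi.basisFun_repr]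
    rfl
  haveI hinvA : Invertible A := hAT ▸ Matrix.invertibleTranspose _
  have hArow : ∀ i, A (eFin (Sum.inl i)) = v i := by
    intro i
    funext k
    rw [hA]
    exact congrFun (hb' i) k
  refine ⟨fun j k => ⅟A k (eFin (Sum.inr j)), ?_, ?_, ?_⟩
  · -- primitivity
    have hCD : (⅟A)ᵀ * Aᵀ = 1 := by
      rw [← Matrix.transpose_mul, mul_invOf_self, Matrix.transpose_one]
    have hDC : Aᵀ * (⅟A)ᵀ = 1 := by
      rw [← Matrix.transpose_mul, invOf_mul_self, Matrix.transpose_one]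
    have hφ : Function.Injective (fun j => eFin (Sum.inr j)) := by
      intro a b hab
      have := eFin.injective hab
      exact Sum.inr_injective this
    exact aux_rows_primitive ((⅟A)ᵀ) (Aᵀ) hCD hDC _ hφ
  · -- orthogonality
    intro i j
    have hm : ∑ k, A (eFin (Sum.inl i)) k * ⅟A k (eFin (Sum.inr j))
        = (A * ⅟A) (eFin (Sum.inl i)) (eFin (Sum.inr j)) := (Matrix.mul_apply).symm
    rw [← hArow i, hm, mul_invOf_self]
    apply Matrix.one_apply_ne
    intro hcon
    have := eFin.injective hcon
    simp at this
  · -- norms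
    rw [mvNorm, mvNorm]
    congr 1
    rw [mvInner, mvInner]
    have hcardle : ∀ t : Finset (Fin (n + 1)), t.card ≤ n + 1 := by
      intro t; simpa using t.card_le_univ
    set Ar := A.map ⇑(Int.castRingHom ℝ) with hAr
    set Br := (⅟A).map ⇑(Int.castRingHom ℝ) with hBr
    have hArBr : Ar * Br = 1 := by
      rw [hAr, hBr, ← Matrix.map_mul, mul_invOf_self]
      exact Matrix.map_one _ (by simp) (by simp)
    have key : ∀ t : Finset (Fin (n + 1)),
        wedge (fun j => fun k => ((⅟A k (eFin (Sum.inr j)) : ℤ) : ℝ)) t *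
          wedge (fun j => fun k => ((⅟A k (eFin (Sum.inr j)) : ℤ) : ℝ)) t =
        wedge (fun j => fun k => ((v j k : ℤ) : ℝ)) tᶜ *
          wedge (fun j => fun k => ((v j k : ℤ) : ℝ)) tᶜ := by
      intro t
      by_cases ht : t.card = n + 1 - r
      · have hc : tᶜ.card = r := by
          rw [Finset.card_compl, Fintype.card_fin]
          have := hcardle t
          omega
        set f : Fin (n + 1 - r) → Fin (n + 1) :=
          fun p => ((t.orderIsoOfFin ht p) : Fin (n + 1)) with hf
        set g : Fin r → Fin (n + 1) :=
          fun p => ((tᶜ.orderIsoOfFin hc p) : Fin (n + 1)) with hg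
        have hinj : Function.Injective (Sum.elim g f) := by
          rintro (a | a) (b | b) hab <;>
            simp only [Sum.elim_inl, Sum.elim_inr, hf, hg] at hab
          · exact congrArg Sum.inl
              ((tᶜ.orderIsoOfFin hc).injective (Subtype.coe_injective hab))
          · exfalso
            have hm1 : (↑(tᶜ.orderIsoOfFin hc a) : Fin (n + 1)) ∈ tᶜ :=
              (tᶜ.orderIsoOfFin hc a).2
            have hm2 : (↑(t.orderIsoOfFin ht b) : Fin (n + 1)) ∈ t :=
              (t.orderIsoOfFin ht b).2
            rw [hab] at hm1
            exact (Finset.mem_compl.mp hm1) hm2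
          · exfalso
            have hm1 : (↑(tᶜ.orderIsoOfFin hc b) : Fin (n + 1)) ∈ tᶜ :=
              (tᶜ.orderIsoOfFin hc b).2
            have hm2 : (↑(t.orderIsoOfFin ht a) : Fin (n + 1)) ∈ t :=
              (t.orderIsoOfFin ht a).2
            rw [← hab] at hm1
            exact (Finset.mem_compl.mp hm1) hm2
          · exact congrArg Sum.inr
              ((t.orderIsoOfFin ht).injective (Subtype.coe_injective hab))
        have hbij : Function.Bijective (Sum.elim g f) :=
          (Fintype.bijective_iff_injective_and_card _).mpr
            ⟨hinj, by simp only [Fintype.card_sum, Fintype.card_fin]; omega⟩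
        set Et : (Fin r ⊕ Fin (n + 1 - r)) ≃ Fin (n + 1) :=
          Equiv.ofBijective _ hbij with hEt
        set A' := Ar.submatrix ⇑eFin ⇑Et with hA'
        set B' := Br.submatrix ⇑Et ⇑eFin with hB'
        have hone : A' * B' = 1 := by
          rw [hA', hB', Matrix.submatrix_mul_equiv, hArBr, Matrix.submatrix_one_equiv]
        have hjac : A'.det * (B'.toBlocks₂₂).det = (A'.toBlocks₁₁).det := by
          have h2 : Matrix.fromBlocks A'.toBlocks₁₁ A'.toBlocks₁₂
                A'.toBlocks₂₁ A'.toBlocks₂₂ *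
              Matrix.fromBlocks B'.toBlocks₁₁ B'.toBlocks₁₂
                B'.toBlocks₂₁ B'.toBlocks₂₂ = 1 := by
            rw [Matrix.fromBlocks_toBlocks, Matrix.fromBlocks_toBlocks]; exact hone
          have := aux_jac22 _ _ _ _ _ _ _ _ h2
          rwa [Matrix.fromBlocks_toBlocks] at this
        have hdet2 : A'.det * A'.det = 1 := by
          have hZ : (A.submatrix ⇑eFin ⇑Et) * ((⅟A).submatrix ⇑Et ⇑eFin) = 1 := by
            rw [Matrix.submatrix_mul_equiv, mul_invOf_self, Matrix.submatrix_one_equiv]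
          have hZd : (A.submatrix ⇑eFin ⇑Et).det * ((⅟A).submatrix ⇑Et ⇑eFin).det = 1 := by
            rw [← Matrix.det_mul, hZ, Matrix.det_one]
          have hcast : A'.det = (((A.submatrix ⇑eFin ⇑Et).det : ℤ) : ℝ) := by
            rw [hA', hAr, Matrix.submatrix_map, ← RingHom.mapMatrix_apply,
              ← RingHom.map_det]
            simp
          rcases Int.isUnit_iff.mp (IsUnit.of_mul_eq_one _ hZd) with h | h <;>
            rw [hcast, h] <;> norm_num
        have hwu : wedge (fun j => fun k => ((⅟A k (eFin (Sum.inr j)) : ℤ) : ℝ)) t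
            = (B'.toBlocks₂₂).det := by
          rw [wedge, dif_pos ht]
          congr 1
        have hwv : wedge (fun j => fun k => ((v j k : ℤ) : ℝ)) tᶜ
            = (A'.toBlocks₁₁).det := by
          rw [wedge, dif_pos hc, ← Matrix.det_transpose (A'.toBlocks₁₁)]
          congr 1
          ext p q
          simp only [Matrix.of_apply]
          rw [← hArow q]
          rfl
        rw [hwu, hwv]
        linear_combination (-(B'.toBlocks₂₂.det * B'.toBlocks₂₂.det)) * hdet2 +
          (A'.det * B'.toBlocks₂₂.det + A'.toBlocks₁₁.det) * hjac
      · have hc : tᶜ.card ≠ r := by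
          rw [Finset.card_compl, Fintype.card_fin]
          have := hcardle t
          omega
        rw [wedge, wedge, dif_neg ht, dif_neg hc]
    exact (Fintype.sum_equiv
      ⟨fun s => sᶜ, fun s => sᶜ, fun s => compl_compl s, fun s => compl_compl s⟩
      _ _ (fun t => key t)).symm
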